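/- For every real z > 0, the function ν ↦ J_ν(z) is differentiable on ℂ, and its derivative with respect to the order ν satisfies ∂/∂ν J_ν(z) = J_ν(z)·log(z/2) + (z/2)^ν · ∑_{m=0}^∞ G^{(1)}(ν+1+m) · (−z²/4)^m / m!. -/

import Mathlib

open scoped BigOperators

/-- The reciprocal of the complex Gamma function, an entire function
(Mathlib's `Complex.Gamma` vanishes at nonpositive integers, so the inverse is `0` there). -/
noncomputable def Grec (t : ℂ) : ℂ := (Complex.Gamma t)⁻¹

/-- `G k t` is the `k`-th derivative of the reciprocal Gamma function at `t`. -/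
noncomputable def G (k : ℕ) (t : ℂ) : ℂ := iteratedDeriv k Grec t

/-- The Maclaurin coefficients of `1/Γ`: `c j = G^{(j)}(0)/j!`. -/
noncomputable def mcCoeff (j : ℕ) : ℂ := iteratedDeriv j Grec 0 / (j.factorial : ℂ)

/-- Bessel function of the first kind `J_ν(z)` for real `z > 0` and complex order `ν`,
with `(z/2)^ν = exp (ν log (z/2))`. -/
noncomputable def besselJ (z : ℝ) (ν : ℂ) : ℂ :=
  Complex.exp (ν * Complex.log ((z : ℂ) / 2)) *
    ∑' m : ℕ, (-(z : ℂ) ^ 2 / 4) ^ m / ((m.factorial : ℂ) * Complex.Gamma (ν + 1 + m))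

/-- Pochhammer symbol `(t)_m = t (t+1) ⋯ (t+m-1)`. -/
noncomputable def poch (t : ℂ) (m : ℕ) : ℂ := ∏ i ∈ Finset.range m, (t + i)

/-- `P m k t = (1/k!) dᵏ/dtᵏ (t)_m`. -/
noncomputable def P (m k : ℕ) (t : ℂ) : ℂ :=
  ((k.factorial : ℂ))⁻¹ * iteratedDeriv k (fun s => poch s m) t

/-- `Q m k t = (1/k!) dᵏ/dtᵏ (1/(t)_m)`. -/
noncomputable def Q (m k : ℕ) (t : ℂ) : ℂ :=
  ((k.factorial : ℂ))⁻¹ * iteratedDeriv k (fun s => (poch s m)⁻¹) t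

/-- Signed Stirling numbers of the first kind: `s(n,k)` is the coefficient of `x^k`
in `x(x-1)⋯(x-n+1)`. -/
noncomputable def stirS (n k : ℕ) : ℤ := (descPochhammer ℤ n).coeff k

/-- Modified generalized harmonic numbers `Ĥ_m^{(k)}`. -/
noncomputable def Hhat (m k : ℕ) : ℝ :=
  if m = 0 then (if k = 0 then 1 else 0)
  else ∑ j ∈ Finset.Icc 1 m, (-1 : ℝ) ^ (j - 1) * (m.choose j) / (j : ℝ) ^ k

/-- Digamma function `ψ = Γ'/Γ`. -/
noncomputable def digamma (t : ℂ) : ℂ := deriv Complex.Gamma t / Complex.Gamma t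

lemma Grec_differentiable : Differentiable ℂ Grec :=
  Complex.differentiable_one_div_Gamma

lemma Grec_shift (t : ℂ) : ∀ k : ℕ,
    Grec t = (∏ i ∈ Finset.range k, (t + i)) * Grec (t + k) := by
  intro k
  induction k with
  | zero => simp
  | succ k ih =>
    rw [ih, Finset.prod_range_succ]
    have h : Grec (t + k) = (t + k) * Grec (t + k + 1) :=
      Complex.one_div_Gamma_eq_self_mul_one_div_Gamma_add_one (t + k)
    push_cast
    rw [h, show t + ((k : ℂ) + 1) = t + (k : ℂ) + 1 from by ring]
    ring

/-- Uniform bound for `Grec (y+1+m)` on a ball, independent of `m`. -/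
lemma Grec_bound (ν₀ : ℂ) : ∃ C : ℝ, 0 ≤ C ∧
    ∀ (m : ℕ), ∀ y ∈ Metric.closedBall ν₀ 2, ‖Grec (y + 1 + m)‖ ≤ C := by
  obtain ⟨N, hN⟩ := exists_nat_gt (‖ν₀‖ + 3)
  obtain ⟨C, hC⟩ := (isCompact_closedBall (ν₀ + 1) (3 + N)).exists_bound_of_continuousOn
    (Grec_differentiable.continuous.continuousOn)
  refine ⟨max C 0, le_max_right _ _, ?_⟩
  have hball : ∀ (j : ℕ), (j : ℝ) ≤ 1 + N → ∀ y ∈ Metric.closedBall ν₀ 2,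
      ‖Grec (y + 1 + j)‖ ≤ max C 0 := by
    intro j hj y hy
    refine le_trans (hC _ ?_) (le_max_left C 0)
    simp only [Metric.mem_closedBall] at hy ⊢
    have : y + 1 + (j : ℂ) - (ν₀ + 1) = (y - ν₀) + j := by ring
    calc dist (y + 1 + (j : ℂ)) (ν₀ + 1) = ‖(y - ν₀) + (j : ℂ)‖ := by
          rw [dist_eq_norm, this]
      _ ≤ ‖y - ν₀‖ + ‖(j : ℂ)‖ := norm_add_le _ _
      _ ≤ 2 + j := by
          have : ‖(j : ℂ)‖ = (j : ℝ) := by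
            rw [Complex.norm_natCast]
          rw [this]; exact add_le_add (by rwa [dist_eq_norm] at hy) le_rfl
      _ ≤ 3 + N := by linarith
  intro m y hy
  by_cases hm : m ≤ N
  · refine hball m ?_ y hy
    have h1 : (m : ℝ) ≤ N := Nat.cast_le.mpr hm
    linarith
  · push_neg at hm
    have hy2 : ‖y - ν₀‖ ≤ 2 := by rwa [Metric.mem_closedBall, dist_eq_norm] at hy
    have hRe : -(‖ν₀‖ + 2) ≤ y.re := by
      have h1 : ‖y‖ ≤ ‖ν₀‖ + 2 := by
        calc ‖y‖ = ‖ν₀ + (y - ν₀)‖ := by ring_nf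
          _ ≤ ‖ν₀‖ + ‖y - ν₀‖ := norm_add_le _ _
          _ ≤ ‖ν₀‖ + 2 := by linarith
      have := neg_le_of_abs_le (le_trans (Complex.abs_re_le_norm y) h1)
      linarith
    -- shift identity from N to m
    have key := Grec_shift (y + 1 + N) (m - N)
    have hcast : y + 1 + (N : ℂ) + ((m - N : ℕ) : ℂ) = y + 1 + (m : ℂ) := by
      have : ((m - N : ℕ) : ℂ) = (m : ℂ) - (N : ℂ) := by
        push_cast [Nat.cast_sub hm.le]; ring
      rw [this]; ring
    rw [hcast] at key
    have hprod : 1 ≤ ‖∏ i ∈ Finset.range (m - N), (y + 1 + N + i)‖ := by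
      rw [norm_prod]
      calc (1 : ℝ) = ∏ _i ∈ Finset.range (m - N), (1 : ℝ) := by simp
        _ ≤ ∏ i ∈ Finset.range (m - N), ‖y + 1 + (N : ℂ) + i‖ :=
          Finset.prod_le_prod (fun i _ => zero_le_one) ?_
      intro i _
      have : (1 : ℝ) ≤ (y + 1 + N + i).re := by
        simp only [Complex.add_re, Complex.natCast_re, Complex.one_re]
        have hi : (0 : ℝ) ≤ i := Nat.cast_nonneg i
        have : (‖ν₀‖ + 3 : ℝ) ≤ N := hN.le
        linarith
      calc (1 : ℝ) ≤ (y + 1 + N + i).re := this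
        _ ≤ |(y + 1 + N + i).re| := le_abs_self _
        _ ≤ ‖y + 1 + N + i‖ := Complex.abs_re_le_norm _
    have hbN : ‖Grec (y + 1 + N)‖ ≤ max C 0 := hball N (by linarith) y hy
    calc ‖Grec (y + 1 + m)‖ = 1 * ‖Grec (y + 1 + m)‖ := (one_mul _).symm
      _ ≤ ‖∏ i ∈ Finset.range (m - N), (y + 1 + N + i)‖ * ‖Grec (y + 1 + m)‖ :=
          mul_le_mul_of_nonneg_right hprod (norm_nonneg _)
      _ = ‖Grec (y + 1 + N)‖ := by rw [← norm_mul, ← key]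
      _ ≤ max C 0 := hbN

/-- Uniform bound for the derivative of `Grec` at `x+1+m` for `x` in a ball. -/
lemma deriv_Grec_bound (ν₀ : ℂ) : ∃ C : ℝ, 0 ≤ C ∧
    ∀ (m : ℕ), ∀ x ∈ Metric.closedBall ν₀ 1,
      ‖deriv Grec (x + 1 + m)‖ ≤ C ∧ ‖Grec (x + 1 + m)‖ ≤ C := by
  obtain ⟨C, hC0, hC⟩ := Grec_bound ν₀
  refine ⟨C, hC0, fun m x hx => ⟨?_, ?_⟩⟩
  · have hb : ∀ w ∈ Metric.sphere (x + 1 + (m : ℂ)) 1, ‖Grec w‖ ≤ C := by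
      intro w hw
      have heq : w = (w - 1 - m) + 1 + m := by ring
      rw [heq]
      refine hC m (w - 1 - m) ?_
      rw [Metric.mem_closedBall, dist_eq_norm]
      have : w - 1 - (m : ℂ) - ν₀ = (w - (x + 1 + m)) + (x - ν₀) := by ring
      rw [this]
      calc ‖(w - (x + 1 + (m:ℂ))) + (x - ν₀)‖
          ≤ ‖w - (x + 1 + (m:ℂ))‖ + ‖x - ν₀‖ := norm_add_le _ _
        _ ≤ 1 + 1 := by
            refine add_le_add ?_ ?_
            · rw [Metric.mem_sphere, dist_eq_norm] at hw; rw [hw]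
            · rwa [Metric.mem_closedBall, dist_eq_norm] at hx
        _ = 2 := by norm_num
    have := Complex.norm_deriv_le_of_forall_mem_sphere_norm_le (c := x + 1 + m)
      (R := 1) (f := Grec) one_pos (Grec_differentiable.diffContOnCl) hb
    simpa using this
  · refine hC m x ?_
    rw [Metric.mem_closedBall] at hx ⊢; linarith


lemma besselJ_tsum_hasDerivAt (w : ℂ) (ν : ℂ) :
    HasDerivAt (fun s : ℂ =>
        ∑' m : ℕ, w ^ m / ((m.factorial : ℂ) * Complex.Gamma (s + 1 + m)))
      (∑' m : ℕ, G 1 (ν + 1 + m) * w ^ m / (m.factorial : ℂ)) ν := by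
  obtain ⟨C, hC0, hC⟩ := deriv_Grec_bound ν
  set u : ℕ → ℝ := fun m => C * (‖w‖ ^ m / m.factorial) with hu_def
  have hu : Summable u := (Real.summable_pow_div_factorial ‖w‖).mul_left C
  have hg_eq : ∀ m : ℕ, (fun s : ℂ => w ^ m / ((m.factorial : ℂ) * Complex.Gamma (s + 1 + m)))
      = fun s : ℂ => w ^ m / (m.factorial : ℂ) * Grec (s + 1 + m) := by
    intro m; funext s
    rw [div_mul_eq_div_div, div_eq_mul_inv]; rfl
  have hG1 : ∀ t : ℂ, G 1 t = deriv Grec t := by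
    intro t; simp [G, iteratedDeriv_one]
  have hg : ∀ (m : ℕ) (s : ℂ), s ∈ Metric.ball ν 1 →
      HasDerivAt (fun y : ℂ => w ^ m / ((m.factorial : ℂ) * Complex.Gamma (y + 1 + m)))
        (G 1 (s + 1 + m) * w ^ m / (m.factorial : ℂ)) s := by
    intro m s _
    have hinner : HasDerivAt (fun y : ℂ => y + 1 + (m : ℂ)) 1 s :=
      ((hasDerivAt_id s).add_const 1).add_const (m : ℂ)
    have h1 : HasDerivAt Grec (deriv Grec (s + 1 + m)) (s + 1 + m) :=
      (Grec_differentiable (s + 1 + m)).hasDerivAt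
    have h2 := h1.comp s hinner
    have h3 := h2.const_mul (w ^ m / (m.factorial : ℂ))
    rw [hg_eq m]
    refine h3.congr_deriv ?_
    rw [hG1]; ring
  have hg' : ∀ (m : ℕ) (s : ℂ), s ∈ Metric.ball ν 1 →
      ‖G 1 (s + 1 + m) * w ^ m / (m.factorial : ℂ)‖ ≤ u m := by
    intro m s hs
    have hs' : s ∈ Metric.closedBall ν 1 := Metric.ball_subset_closedBall hs
    have hb := (hC m s hs').1
    rw [hG1]
    rw [norm_div, norm_mul, norm_pow]
    have hfac : ‖((m.factorial : ℂ))‖ = (m.factorial : ℝ) := by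
      rw [Complex.norm_natCast]
    rw [hfac, hu_def]
    have hfp : (0 : ℝ) < (m.factorial : ℝ) := by positivity
    calc ‖deriv Grec (s + 1 + ↑m)‖ * ‖w‖ ^ m / (m.factorial : ℝ)
        ≤ C * ‖w‖ ^ m / (m.factorial : ℝ) := by gcongr
      _ = C * (‖w‖ ^ m / (m.factorial : ℝ)) := by ring
  have hg0 : Summable (fun m : ℕ =>
      w ^ m / ((m.factorial : ℂ) * Complex.Gamma (ν + 1 + m))) := by
    refine Summable.of_norm_bounded hu ?_
    intro m
    have h1 : w ^ m / ((m.factorial : ℂ) * Complex.Gamma (ν + 1 + m))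
        = w ^ m / (m.factorial : ℂ) * Grec (ν + 1 + m) := by
      rw [div_mul_eq_div_div, div_eq_mul_inv]; rfl
    rw [h1, norm_mul, norm_div, norm_pow, Complex.norm_natCast]
    have hb := (hC m ν (Metric.mem_closedBall_self zero_le_one)).2
    calc ‖w‖ ^ m / (m.factorial : ℝ) * ‖Grec (ν + 1 + m)‖
        ≤ ‖w‖ ^ m / (m.factorial : ℝ) * C := by
          refine mul_le_mul_of_nonneg_left hb ?_
          positivity
      _ = u m := by rw [hu_def]; ring
  exact hasDerivAt_tsum_of_isPreconnected hu Metric.isOpen_ball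
    (convex_ball ν 1).isPreconnected hg hg' (Metric.mem_ball_self one_pos) hg0
    (Metric.mem_ball_self one_pos)

lemma besselJ_hasDerivAt (z : ℝ) (ν : ℂ) :
    HasDerivAt (fun ν => besselJ z ν)
      (besselJ z ν * Complex.log ((z : ℂ) / 2) +
        Complex.exp (ν * Complex.log ((z : ℂ) / 2)) *
          ∑' m : ℕ, G 1 (ν + 1 + m) * (-(z : ℂ) ^ 2 / 4) ^ m / (m.factorial : ℂ)) ν := by
  set L := Complex.log ((z : ℂ) / 2) with hL
  have hE : HasDerivAt (fun ν : ℂ => Complex.exp (ν * L)) (Complex.exp (ν * L) * L) ν := by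
    simpa using ((hasDerivAt_id ν).mul_const L).cexp
  have hF := besselJ_tsum_hasDerivAt (-(z : ℂ) ^ 2 / 4) ν
  have h := hE.mul hF
  have heq : (fun ν : ℂ => besselJ z ν) = fun y : ℂ => Complex.exp (y * L) *
      ∑' m : ℕ, (-(z : ℂ) ^ 2 / 4) ^ m / ((m.factorial : ℂ) * Complex.Gamma (y + 1 + m)) := by
    funext y; rfl
  rw [heq]
  refine h.congr_deriv ?_
  rw [besselJ]
  ring


/-- For real `z > 0`, `ν ↦ J_ν(z)` is entire and
`∂/∂ν J_ν(z) = J_ν(z) log(z/2) + (z/2)^ν ∑ₘ G⁽¹⁾(ν+1+m) (−z²/4)ᵐ/m!`. -/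
theorem deriv_besselJ_order (z : ℝ) (hz : 0 < z) :
    Differentiable ℂ (fun ν => besselJ z ν) ∧
    ∀ ν : ℂ, deriv (fun ν => besselJ z ν) ν =
      besselJ z ν * Complex.log ((z : ℂ) / 2) +
        Complex.exp (ν * Complex.log ((z : ℂ) / 2)) *
          ∑' m : ℕ, G 1 (ν + 1 + m) * (-(z : ℂ) ^ 2 / 4) ^ m / (m.factorial : ℂ) := by
  exact ⟨fun ν => (besselJ_hasDerivAt z ν).differentiableAt,
    fun ν => (besselJ_hasDerivAt z ν).deriv⟩
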